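/- Let D = H ∪ H̃ be an n-run foldover OofA design on m components with n = 2h, h ≥ 2, and all n runs distinct, where H̃ consists of the reverses of the runs in H. Then the second moment of the pairwise Kendall tau distances satisfies k_{m2}(D) ≤ [ n m²(m−1)² − 4(n−2){m(m−1)−2} ] / (8(n−1)). -/
import Mathlib


/-- A run (addition order) on `m` components: position `r` receives component `x r`.
The position map `π_x` is `x.symm`. -/
abbrev Run (m : ℕ) := Equiv.Perm (Fin m)

/-- Kendall tau distance between two runs. -/
def kendall {m : ℕ} (x y : Run m) : ℕ :=
  (Finset.univ.filter fun p : Fin m × Fin m =>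
    p.1 < p.2 ∧
      (((x.symm p.1 : ℕ) : ℤ) - ((x.symm p.2 : ℕ) : ℤ)) *
        (((y.symm p.1 : ℕ) : ℤ) - ((y.symm p.2 : ℕ) : ℤ)) < 0).card

/-- The foldover (reverse) of a run: `x̃ r = x (m+1-r)` (positions reversed). -/
def revRun {m : ℕ} (x : Run m) : Run m := Fin.revPerm.trans x

/-- The `2h`-run foldover design `D = H ∪ H̃` generated by a half-design
`H = (x_1, …, x_h)`: its first `h` rows are the `x_i` and its last `h` rows
are their reverses `x̃_i`. -/
def foldover {m h : ℕ} (H : Fin h → Run m) : Fin (h + h) → Run m :=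
  Fin.append H fun i => revRun (H i)

/-- Average pairwise Kendall tau distance of an `n`-run design. -/
noncomputable def kave {m n : ℕ} (D : Fin n → Run m) : ℝ :=
  (∑ p ∈ Finset.univ.filter (fun p : Fin n × Fin n => p.1 < p.2),
      (kendall (D p.1) (D p.2) : ℝ)) / (n.choose 2 : ℝ)

/-- Second moment of the pairwise Kendall tau distances of an `n`-run design. -/
noncomputable def km2 {m n : ℕ} (D : Fin n → Run m) : ℝ :=
  (∑ p ∈ Finset.univ.filter (fun p : Fin n × Fin n => p.1 < p.2),
      (kendall (D p.1) (D p.2) : ℝ) ^ 2) / (n.choose 2 : ℝ)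

/-- Minimum pairwise Kendall tau distance of a design. -/
noncomputable def kmin {m n : ℕ} (D : Fin n → Run m) : ℕ :=
  sInf {v : ℕ | ∃ i j : Fin n, i < j ∧ kendall (D i) (D j) = v}

open Finset

namespace KT

def pd {m : ℕ} (x : Run m) (p : Fin m × Fin m) : ℤ :=
  ((x.symm p.1 : ℕ) : ℤ) - ((x.symm p.2 : ℕ) : ℤ)

lemma kendall_def {m : ℕ} (x y : Run m) :
    kendall x y = (Finset.univ.filter fun p : Fin m × Fin m =>
      p.1 < p.2 ∧ pd x p * pd y p < 0).card := rfl

lemma pd_ne_zero {m : ℕ} (x : Run m) {p : Fin m × Fin m} (hp : p.1 ≠ p.2) : pd x p ≠ 0 := by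
  have h1 : x.symm p.1 ≠ x.symm p.2 := fun e => hp (x.symm.injective e)
  have h2 : (x.symm p.1 : ℕ) ≠ (x.symm p.2 : ℕ) := fun e => h1 (Fin.ext e)
  simpa [pd, sub_eq_zero] using fun e => h2 (by exact_mod_cast e)

lemma pd_rev {m : ℕ} (x : Run m) (p : Fin m × Fin m) : pd (revRun x) p = - pd x p := by
  have hval : ∀ c : Fin m, (((revRun x).symm c : ℕ) : ℤ) = (m : ℤ) - 1 - ((x.symm c : ℕ) : ℤ) := by
    intro c
    have h1 : (revRun x).symm c = (x.symm c).rev := by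
      simp [revRun, Equiv.symm_trans_apply, Fin.revPerm_symm]
    rw [h1]
    have h2 : ((x.symm c).rev : ℕ) = m - ((x.symm c : ℕ) + 1) := Fin.val_rev _
    have h3 : (x.symm c : ℕ) + 1 ≤ m := (x.symm c).2
    rw [h2]; omega
  simp only [pd, hval]; ring

lemma kendall_comm {m : ℕ} (x y : Run m) : kendall x y = kendall y x := by
  rw [kendall_def, kendall_def]; congr 1
  apply filter_congr; intro p _; rw [mul_comm]

lemma kendall_self {m : ℕ} (x : Run m) : kendall x x = 0 := by
  rw [kendall_def, card_eq_zero, eq_empty_iff_forall_notMem]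
  rintro p hp
  rw [mem_filter] at hp
  exact absurd hp.2.2 (not_lt.mpr (mul_self_nonneg _))

lemma card_pairs (m : ℕ) :
    (Finset.univ.filter fun p : Fin m × Fin m => p.1 < p.2).card = m.choose 2 := by
  rw [card_filter, Fintype.sum_prod_type_right]
  have h1 : ∀ b : Fin m, (∑ a : Fin m, if (a, b).1 < (a, b).2 then 1 else 0) = (b : ℕ) := by
    intro b
    rw [Finset.sum_boole]
    simp only [Nat.cast_id]
    have : Finset.univ.filter (fun a : Fin m => (a, b).1 < (a, b).2) = Finset.Iio b := by
      ext a; simp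
    rw [this, Fin.card_Iio]
  simp only [h1]
  rw [Fin.sum_univ_eq_sum_range (fun i => i) m, Finset.sum_range_id, Nat.choose_two_right]

lemma kendall_rev_rev {m : ℕ} (x y : Run m) :
    kendall (revRun x) (revRun y) = kendall x y := by
  rw [kendall_def, kendall_def]; congr 1
  apply filter_congr; intro p _
  rw [pd_rev, pd_rev, neg_mul_neg]

lemma kendall_add_rev {m : ℕ} (x y : Run m) :
    kendall x y + kendall x (revRun y) = m.choose 2 := by
  rw [kendall_def, kendall_def, ← card_pairs m, ← card_union_of_disjoint]
  · congr 1
    ext p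
    simp only [mem_union, mem_filter, mem_univ, true_and, pd_rev, mul_neg, neg_neg]
    constructor
    · rintro (⟨h1, _⟩ | ⟨h1, _⟩) <;> exact h1
    · intro h1
      have hne : pd x p * pd y p ≠ 0 :=
        mul_ne_zero (pd_ne_zero x h1.ne) (pd_ne_zero y h1.ne)
      rcases hne.lt_or_gt with h | h
      · exact Or.inl ⟨h1, h⟩
      · exact Or.inr ⟨h1, by linarith⟩
  · rw [Finset.disjoint_filter]
    rintro p - ⟨h1, h2⟩ ⟨-, h3⟩
    rw [pd_rev, mul_neg] at h3
    linarith

lemma eq_of_kendall_eq_zero {m : ℕ} {x y : Run m} (h : kendall x y = 0) : x = y := by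
  have key : ∀ a b : Fin m, a < b → 0 < pd x (a, b) * pd y (a, b) := by
    intro a b hab
    rw [kendall_def, card_eq_zero, eq_empty_iff_forall_notMem] at h
    have h1 := h (a, b)
    simp only [mem_filter, mem_univ, true_and, not_and, not_lt] at h1
    have h2 : pd x (a, b) * pd y (a, b) ≠ 0 :=
      mul_ne_zero (pd_ne_zero x hab.ne) (pd_ne_zero y hab.ne)
    exact lt_of_le_of_ne (h1 hab) (Ne.symm h2)
  have hmono : StrictMono (fun i => y.symm (x i)) := by
    intro i j hij
    set a := x i with ha
    set b := x j with hb
    have hxa : x.symm a = i := x.symm_apply_apply i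
    have hxb : x.symm b = j := x.symm_apply_apply j
    have hab : a ≠ b := fun e => hij.ne (x.injective e)
    rcases hab.lt_or_gt with hlt | hlt
    · have := key a b hlt
      have hx : pd x (a, b) < 0 := by
        simp only [pd, hxa, hxb]
        have : (i : ℕ) < (j : ℕ) := hij
        push_cast; omega
      have hy : pd y (a, b) < 0 := by nlinarith
      simp only [pd, sub_neg] at hy
      exact_mod_cast hy
    · have := key b a hlt
      have hx : 0 < pd x (b, a) := by
        simp only [pd, hxa, hxb]
        have : (i : ℕ) < (j : ℕ) := hij
        push_cast; omega
      have hy : 0 < pd y (b, a) := by nlinarith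
      simp only [pd, sub_pos] at hy
      exact_mod_cast hy
  have hrange : Set.range (fun i => y.symm (x i)) = Set.range (id : Fin m → Fin m) := by
    ext c
    simp only [Set.mem_range, id, Set.range_id, Set.mem_univ, iff_true]
    exact ⟨x.symm (y c), by simp⟩
  haveI : WellFoundedLT (Fin m) := inferInstance
  have := (StrictMono.range_inj (β := Fin m) (γ := Fin m) hmono strictMono_id).mp hrange
  apply Equiv.ext
  intro i
  have : y.symm (x i) = i := congrFun this i
  calc x i = y (y.symm (x i)) := (y.apply_symm_apply _).symm
    _ = y i := by rw [this]

end KT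

open KT in
/-- Upper bound for the second Kendall tau distance moment of a nonreplicated
foldover design with `n = 2h` runs. -/
theorem stmt16 {m h : ℕ} (hm : 2 ≤ m) (hh : 2 ≤ h) (H : Fin h → Run m)
    (hdist : Function.Injective (foldover H)) :
    km2 (foldover H) ≤
      ((2 * (h : ℝ)) * (m : ℝ) ^ 2 * ((m : ℝ) - 1) ^ 2 -
          4 * (2 * (h : ℝ) - 2) * ((m : ℝ) * ((m : ℝ) - 1) - 2)) /
        (8 * (2 * (h : ℝ) - 1)) := by
  classical
  set D := foldover H with hD
  set K : ℕ := m.choose 2 with hK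
  have hDl : ∀ i : Fin h, D (Fin.castAdd h i) = H i := fun i => Fin.append_left _ _ i
  have hDr : ∀ i : Fin h, D (Fin.natAdd h i) = revRun (H i) := fun i => Fin.append_right _ _ i
  have hDr' : ∀ i : Fin h, D (i.addNat h) = revRun (H i) := by
    intro i
    have : i.addNat h = Fin.natAdd h i := by ext; simp [Nat.add_comm]
    rw [this, hDr]
  have hab : ∀ x y : Run m, (kendall x y : ℝ) + (kendall x (revRun y) : ℝ) = (K : ℝ) := by
    intro x y
    rw [hK, ← kendall_add_rev x y]
    push_cast; ring
  set F : Fin (h + h) × Fin (h + h) → ℝ := fun p => (kendall (D p.1) (D p.2) : ℝ) ^ 2 with hF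
  set S : ℝ := ∑ p ∈ Finset.univ.filter (fun p : Fin (h + h) × Fin (h + h) => p.1 < p.2), F p
    with hS
  set T : ℝ := ∑ p : Fin (h + h) × Fin (h + h), F p with hT
  -- T = 2 S
  have hT2 : T = 2 * S := by
    have h1 : T = S + ∑ p ∈ Finset.univ.filter
        (fun p : Fin (h + h) × Fin (h + h) => ¬ p.1 < p.2), F p :=
      (Finset.sum_filter_add_sum_filter_not Finset.univ _ F).symm
    have h2 : ∑ p ∈ Finset.univ.filter
        (fun p : Fin (h + h) × Fin (h + h) => ¬ p.1 < p.2), F p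
        = ∑ p ∈ Finset.univ.filter
        (fun p : Fin (h + h) × Fin (h + h) => p.2 < p.1), F p := by
      refine (Finset.sum_subset ?_ ?_).symm
      · intro p hp
        simp only [Finset.mem_filter, Finset.mem_univ, true_and] at hp ⊢
        exact not_lt.mpr hp.le
      · intro p hp hnp
        simp only [Finset.mem_filter, Finset.mem_univ, true_and, not_lt] at hp hnp
        have : p.1 = p.2 := le_antisymm hnp hp
        simp [hF, this, kendall_self]
    have h3 : ∑ p ∈ Finset.univ.filter
        (fun p : Fin (h + h) × Fin (h + h) => p.2 < p.1), F p = S := by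
      rw [hS]
      refine Finset.sum_bij' (fun p _ => Prod.swap p) (fun p _ => Prod.swap p)
        ?_ ?_ ?_ ?_ ?_
      · intro p hp; simp only [Finset.mem_filter, Finset.mem_univ, true_and] at hp ⊢
        simpa using hp
      · intro p hp; simp only [Finset.mem_filter, Finset.mem_univ, true_and] at hp ⊢
        simpa using hp
      · intro p _; simp
      · intro p _; simp
      · intro p _; simp [hF, kendall_comm]
    rw [h1, h2, h3]; ring
  -- expansion of T
  set A : ℝ := ∑ i : Fin h, ∑ j : Fin h, (kendall (H i) (H j) : ℝ) ^ 2 with hA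
  set B : ℝ := ∑ i : Fin h, ∑ j : Fin h, (kendall (H i) (revRun (H j)) : ℝ) ^ 2 with hB
  have hTexp : T = 2 * A + 2 * B := by
    have e1 : T = ∑ i : Fin (h + h), ∑ j : Fin (h + h), F (i, j) := by
      rw [hT]; exact Fintype.sum_prod_type _
    rw [e1, Fin.sum_univ_add]
    have e2 : ∀ i : Fin h, ∑ j : Fin (h + h), F (Fin.castAdd h i, j)
        = (∑ j : Fin h, (kendall (H i) (H j) : ℝ) ^ 2)
          + ∑ j : Fin h, (kendall (H i) (revRun (H j)) : ℝ) ^ 2 := by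
      intro i
      rw [Fin.sum_univ_add]
      congr 1
      · exact Finset.sum_congr rfl fun j _ => by simp [hF, hDl, hDr, hDr']
      · exact Finset.sum_congr rfl fun j _ => by simp [hF, hDl, hDr, hDr']
    have e3 : ∀ i : Fin h, ∑ j : Fin (h + h), F (Fin.natAdd h i, j)
        = (∑ j : Fin h, (kendall (H j) (revRun (H i)) : ℝ) ^ 2)
          + ∑ j : Fin h, (kendall (H i) (H j) : ℝ) ^ 2 := by
      intro i
      rw [Fin.sum_univ_add]
      congr 1
      · refine Finset.sum_congr rfl fun j _ => ?_
        simp only [hF, hDl, hDr, hDr']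
        rw [kendall_comm]
      · refine Finset.sum_congr rfl fun j _ => ?_
        simp only [hF, hDl, hDr, hDr']
        rw [kendall_rev_rev]
    have e4 : ∑ i : Fin h, ∑ j : Fin h, (kendall (H j) (revRun (H i)) : ℝ) ^ 2
        = ∑ i : Fin h, ∑ j : Fin h, (kendall (H i) (revRun (H j)) : ℝ) ^ 2 :=
      Finset.sum_comm
    simp only [e2, e3, Finset.sum_add_distrib]
    rw [e4, ← hA, ← hB]
    ring
  -- pointwise bounds
  have hKm : (1 : ℕ) ≤ K := by
    rw [hK, Nat.choose_two_right]
    have : 2 * 1 ≤ m * (m - 1) := by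
      calc 2 * 1 = 2 := by ring
      _ ≤ m * (m-1) := by nlinarith [Nat.sub_le m 1, Nat.le_sub_one_of_lt (lt_of_lt_of_le one_lt_two hm)]
    omega
  have hne1 : ∀ i j : Fin h, i ≠ j → H i ≠ H j := by
    intro i j hij e
    apply hij
    have h1 : Fin.castAdd h i = Fin.castAdd h j := hdist (by rw [hDl, hDl, e])
    have := congrArg Fin.val h1
    exact Fin.ext this
  have hne2 : ∀ i j : Fin h, H i ≠ revRun (H j) := by
    intro i j e
    have h1 : Fin.castAdd h i = Fin.natAdd h j := hdist (by rw [hDl, hDr, e])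
    have h2 := congrArg Fin.val h1
    simp only [Fin.coe_castAdd, Fin.coe_natAdd] at h2
    have := i.isLt
    omega
  have hk1 : ∀ x y : Run m, x ≠ y → (1 : ℝ) ≤ (kendall x y : ℝ) := by
    intro x y hxy
    have : kendall x y ≠ 0 := fun e => hxy (eq_of_kendall_eq_zero e)
    exact_mod_cast Nat.one_le_iff_ne_zero.mpr this
  have hT3 : T = ∑ i : Fin h, ∑ j : Fin h,
      (2 * (kendall (H i) (H j) : ℝ) ^ 2 + 2 * (kendall (H i) (revRun (H j)) : ℝ) ^ 2) := by
    rw [hTexp, hA, hB, Finset.mul_sum, Finset.mul_sum, ← Finset.sum_add_distrib]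
    refine Finset.sum_congr rfl fun i _ => ?_
    rw [Finset.mul_sum, Finset.mul_sum, ← Finset.sum_add_distrib]
  have hrow : ∀ i : Fin h, ∑ j : Fin h,
      (2 * (kendall (H i) (H j) : ℝ) ^ 2 + 2 * (kendall (H i) (revRun (H j)) : ℝ) ^ 2)
      ≤ 2 * (K : ℝ) ^ 2 + ((h : ℝ) - 1) * (2 + 2 * ((K : ℝ) - 1) ^ 2) := by
    intro i
    rw [← Finset.add_sum_erase _ _ (Finset.mem_univ i)]
    refine add_le_add ?_ ?_
    · have h1 := hab (H i) (H i)
      rw [kendall_self] at h1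
      rw [kendall_self]
      push_cast at h1 ⊢
      nlinarith [h1]
    · have hcard : (((Finset.univ.erase i)).card : ℝ) = (h : ℝ) - 1 := by
        rw [Finset.card_erase_of_mem (Finset.mem_univ i), Finset.card_univ, Fintype.card_fin]
        have h1 : 1 ≤ h := le_trans one_le_two hh
        push_cast [Nat.cast_sub h1]
        ring
      calc ∑ j ∈ Finset.univ.erase i,
            (2 * (kendall (H i) (H j) : ℝ) ^ 2 + 2 * (kendall (H i) (revRun (H j)) : ℝ) ^ 2)
          ≤ (Finset.univ.erase i).card • (2 + 2 * ((K : ℝ) - 1) ^ 2) := by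
            refine Finset.sum_le_card_nsmul _ _ _ ?_
            intro j hj
            have hij : j ≠ i := Finset.ne_of_mem_erase hj
            have ha1 : (1 : ℝ) ≤ (kendall (H i) (H j) : ℝ) := hk1 _ _ (hne1 i j (Ne.symm hij))
            have hb1 : (1 : ℝ) ≤ (kendall (H i) (revRun (H j)) : ℝ) := hk1 _ _ (hne2 i j)
            have habij := hab (H i) (H j)
            nlinarith [habij, ha1, hb1]
        _ = ((h : ℝ) - 1) * (2 + 2 * ((K : ℝ) - 1) ^ 2) := by
            rw [nsmul_eq_mul, hcard]
  have hTle : T ≤ (h : ℝ) * (2 * (K : ℝ) ^ 2 + ((h : ℝ) - 1) * (2 + 2 * ((K : ℝ) - 1) ^ 2)) := by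
    rw [hT3]
    calc ∑ i : Fin h, ∑ j : Fin h,
          (2 * (kendall (H i) (H j) : ℝ) ^ 2 + 2 * (kendall (H i) (revRun (H j)) : ℝ) ^ 2)
        ≤ (Finset.univ : Finset (Fin h)).card •
            (2 * (K : ℝ) ^ 2 + ((h : ℝ) - 1) * (2 + 2 * ((K : ℝ) - 1) ^ 2)) :=
          Finset.sum_le_card_nsmul _ _ _ (fun i _ => hrow i)
      _ = (h : ℝ) * _ := by
          rw [Finset.card_univ, Fintype.card_fin, nsmul_eq_mul]
  have hkm2eq : km2 D = S / (((h + h).choose 2 : ℕ) : ℝ) := rfl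
  have hC : (((h + h).choose 2 : ℕ) : ℝ) = (h : ℝ) * (2 * (h : ℝ) - 1) := by
    rw [Nat.cast_choose_two]
    push_cast
    ring
  have hhr : (2 : ℝ) ≤ (h : ℝ) := by exact_mod_cast hh
  have hh0 : (0 : ℝ) < (h : ℝ) := by linarith
  have hh1 : (0 : ℝ) < 2 * (h : ℝ) - 1 := by linarith
  have hCpos : (0 : ℝ) < (h : ℝ) * (2 * (h : ℝ) - 1) := mul_pos hh0 hh1
  have hKr : (K : ℝ) = (m : ℝ) * ((m : ℝ) - 1) / 2 := by rw [hK, Nat.cast_choose_two]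
  have hSle : S ≤ (h : ℝ) * (2 * (K : ℝ) ^ 2 + ((h : ℝ) - 1) * (2 + 2 * ((K : ℝ) - 1) ^ 2)) / 2 := by
    rw [hT2] at hTle
    linarith
  have hM : ((2 * (h : ℝ)) * (m : ℝ) ^ 2 * ((m : ℝ) - 1) ^ 2 -
          4 * (2 * (h : ℝ) - 2) * ((m : ℝ) * ((m : ℝ) - 1) - 2)) /
        (8 * (2 * (h : ℝ) - 1))
      = ((h : ℝ) * (2 * (K : ℝ) ^ 2 + ((h : ℝ) - 1) * (2 + 2 * ((K : ℝ) - 1) ^ 2)) / 2) /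
        ((h : ℝ) * (2 * (h : ℝ) - 1)) := by
    rw [hKr]
    have h1 : (h : ℝ) ≠ 0 := ne_of_gt hh0
    have h2 : (2 * (h : ℝ) - 1) ≠ 0 := ne_of_gt hh1
    field_simp
    ring
  rw [hkm2eq, hC, hM]
  exact (div_le_div_iff_of_pos_right hCpos).mpr hSle
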